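/- arXiv:math/0310427 — 2 statements merged into one kernel-verified Lean document; each statement's English description precedes it below -/
import Mathlib

section
/- Let Y be a real-valued random variable whose law has an even density p with respect to Lebesgue measure (p measurable, nonnegative, p(−u) = p(u), ∫ p = 1). Then for every Borel set A ⊆ [−1,1], the probability that g(f(Y)) ∈ A equals ∫_A Σ_{k∈ℤ} p(u − 2k) du; in particular the law of the reflected variable g(f(Y)) has density u ↦ Σ_{k∈ℤ} p(u − 2k) on [−1,1] and density 0 outside [−1,1]. -/
open MeasureTheory
open scoped ENNReal

/-- The map `f : ℝ → [-2,2)`, `f u = ((u+2) mod 4) - 2`. -/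
noncomputable def f (u : ℝ) : ℝ := (u + 2) - 4 * (⌊(u + 2) / 4⌋ : ℝ) - 2

/-- The tent map `g : [-2,2) → [-1,1]`: `g u = u` on `[-1,1]`, `g u = 2 - u` on `(1,2)`,
`g u = -2 - u` on `[-2,-1)`. -/
noncomputable def g (u : ℝ) : ℝ := if u < -1 then -2 - u else if u ≤ 1 then u else 2 - u

lemma measurable_f : Measurable f := by
  unfold f
  have hcast : Measurable fun u : ℝ => ((⌊(u + 2) / 4⌋ : ℤ) : ℝ) :=
    measurable_from_top.comp (((measurable_id.add_const 2).div_const 4).floor)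
  exact ((measurable_id.add_const 2).sub (hcast.const_mul 4)).sub measurable_const

lemma measurable_g : Measurable g := by
  unfold g
  refine Measurable.ite (measurableSet_lt measurable_id measurable_const)
    (measurable_const.sub measurable_id) ?_
  exact Measurable.ite (measurableSet_le measurable_id measurable_const) measurable_id
    (measurable_const.sub measurable_id)

lemma measurable_gf : Measurable fun u => g (f u) := measurable_g.comp measurable_f

lemma gf_mem (u : ℝ) : g (f u) ∈ Set.Icc (-1 : ℝ) 1 := by
  have h1 : (⌊(u + 2) / 4⌋ : ℝ) ≤ (u + 2) / 4 := Int.floor_le _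
  have h2 : (u + 2) / 4 < ⌊(u + 2) / 4⌋ + 1 := Int.lt_floor_add_one _
  have hf1 : -2 ≤ f u := by unfold f; linarith
  have hf2 : f u < 2 := by unfold f; linarith
  unfold g
  split_ifs <;> constructor <;> linarith

lemma gf_even (m : ℤ) {u : ℝ} (h1 : 4 * m - 1 ≤ u) (h2 : u < 4 * m + 1) :
    g (f u) = u - 4 * m := by
  have hfl : ⌊(u + 2) / 4⌋ = m := by
    rw [Int.floor_eq_iff]
    constructor
    · rw [le_div_iff₀ (by norm_num)]; linarith
    · rw [div_lt_iff₀ (by norm_num)]; push_cast; linarith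
  have hf : f u = u - 4 * m := by unfold f; rw [hfl]; ring
  unfold g
  rw [hf]
  split_ifs <;> linarith

lemma gf_odd (m : ℤ) {u : ℝ} (h1 : 4 * m + 1 ≤ u) (h2 : u < 4 * m + 3) :
    g (f u) = 4 * m + 2 - u := by
  rcases lt_or_ge u (4 * m + 2) with hu | hu
  · have hfl : ⌊(u + 2) / 4⌋ = m := by
      rw [Int.floor_eq_iff]
      constructor
      · rw [le_div_iff₀ (by norm_num)]; linarith
      · rw [div_lt_iff₀ (by norm_num)]; push_cast; linarith
    have hf : f u = u - 4 * m := by unfold f; rw [hfl]; ring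
    unfold g
    rw [hf]
    split_ifs <;> linarith
  · have hfl : ⌊(u + 2) / 4⌋ = m + 1 := by
      rw [Int.floor_eq_iff]
      constructor
      · push_cast; rw [le_div_iff₀ (by norm_num)]; linarith
      · push_cast; rw [div_lt_iff₀ (by norm_num)]; linarith
    have hf : f u = u - 4 * m - 4 := by unfold f; rw [hfl]; push_cast; ring
  -- f u ∈ [-2,-1)
    unfold g
    rw [hf]
    split_ifs <;> linarith

/-- The partition of `ℝ` into intervals `[2k-1, 2k+1)`. -/
def S (k : ℤ) : Set ℝ := Set.Ico (2 * k - 1) (2 * k + 1)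

lemma S_meas (k : ℤ) : MeasurableSet (S k) := measurableSet_Ico

lemma S_disj : Pairwise (Function.onFun Disjoint S) := by
  intro i j hij
  simp only [Function.onFun, S, Set.Ico_disjoint_Ico]
  rcases lt_or_gt_of_ne hij with h | h
  · have : (i : ℝ) + 1 ≤ j := by exact_mod_cast Int.add_one_le_iff.mpr h
    calc min (2 * (i:ℝ) + 1) (2 * j + 1) ≤ 2 * (i:ℝ) + 1 := min_le_left _ _
      _ ≤ 2 * (j:ℝ) - 1 := by linarith
      _ ≤ max (2 * (i:ℝ) - 1) (2 * j - 1) := le_max_right _ _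
  · have : (j : ℝ) + 1 ≤ i := by exact_mod_cast Int.add_one_le_iff.mpr h
    calc min (2 * (i:ℝ) + 1) (2 * j + 1) ≤ 2 * (j:ℝ) + 1 := min_le_right _ _
      _ ≤ 2 * (i:ℝ) - 1 := by linarith
      _ ≤ max (2 * (i:ℝ) - 1) (2 * j - 1) := le_max_left _ _

lemma S_cover : (⋃ k : ℤ, S k) = Set.univ := by
  ext u
  simp only [Set.mem_iUnion, Set.mem_univ, iff_true, S, Set.mem_Ico]
  refine ⟨⌊(u + 1) / 2⌋, ?_, ?_⟩
  · have := Int.floor_le ((u + 1) / 2)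
    rw [le_div_iff₀ (by norm_num)] at this
    linarith
  · have := Int.lt_floor_add_one ((u + 1) / 2)
    rw [div_lt_iff₀ (by norm_num)] at this
    linarith

/-- The reindexing involution `k ↦ -k` on even, `k ↦ k` on odd integers. -/
def flipEquiv : ℤ ≃ ℤ where
  toFun k := if Even k then -k else k
  invFun k := if Even k then -k else k
  left_inv k := by
    by_cases h : Even k
    · simp [h, even_neg]
    · simp [h]
  right_inv k := by
    by_cases h : Even k
    · simp [h, even_neg]
    · simp [h]

lemma key_lintegral (p : ℝ → ℝ) (hp : Measurable p) (heven : ∀ u, p (-u) = p u)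
    (B : Set ℝ) (hB : MeasurableSet B) (hBsub : B ⊆ Set.Icc (-1 : ℝ) 1) :
    ∫⁻ u in (fun u => g (f u)) ⁻¹' B, ENNReal.ofReal (p u)
      = ∑' k : ℤ, ∫⁻ u in B, ENNReal.ofReal (p (u - 2 * k)) := by
  set P : ℝ → ℝ≥0∞ := fun u => ENNReal.ofReal (p u) with hPdef
  have hsplit : (fun u => g (f u)) ⁻¹' B = ⋃ k : ℤ, ((fun u => g (f u)) ⁻¹' B ∩ S k) := by
    rw [← Set.inter_iUnion, S_cover, Set.inter_univ]
  rw [hsplit, lintegral_iUnion (fun k => (measurable_gf hB).inter (S_meas k))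
      (fun i j hij => (S_disj hij).mono Set.inter_subset_right Set.inter_subset_right)]
  have hterm : ∀ k : ℤ, ∫⁻ u in (fun u => g (f u)) ⁻¹' B ∩ S k, P u
      = ∫⁻ u in B, P (u - 2 * (flipEquiv k : ℤ)) := by
    intro k
    rcases Int.even_or_odd k with hk | hk
    · obtain ⟨m, hm⟩ := hk
      have hkr : (k : ℝ) = 2 * m := by rw [hm]; push_cast; ring
      have hseteq : (fun u => g (f u)) ⁻¹' B ∩ S k
          = ((fun u => u - 4 * (m : ℝ)) ⁻¹' B) \ {4 * (m : ℝ) + 1} := by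
        ext u
        simp only [Set.mem_inter_iff, Set.mem_preimage, S, Set.mem_Ico, Set.mem_diff,
          Set.mem_singleton_iff]
        constructor
        · rintro ⟨huB, hu1, hu2⟩
          rw [hkr] at hu1 hu2
          rw [gf_even m (by linarith) (by linarith)] at huB
          exact ⟨huB, by intro hc; rw [hc] at hu2; linarith⟩
        · rintro ⟨huB, hne⟩
          obtain ⟨hl, hr⟩ := hBsub huB
          have hu2 : u < 4 * m + 1 := lt_of_le_of_ne (by linarith) hne
          rw [hkr]
          exact ⟨by rw [gf_even m (by linarith) hu2]; exact huB, by linarith, by linarith⟩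
      have hae : ((fun u => u - 4 * (m : ℝ)) ⁻¹' B) \ ({4 * (m : ℝ) + 1} : Set ℝ)
          =ᵐ[volume] ((fun u => u - 4 * (m : ℝ)) ⁻¹' B) :=
        diff_ae_eq_self.mpr (measure_mono_null Set.inter_subset_right (measure_singleton _))
      rw [hseteq]; refine (setLIntegral_congr hae).trans ?_
      have htr := (measurePreserving_sub_right volume (4 * (m : ℝ))).setLIntegral_comp_preimage_emb
        (MeasurableEquiv.subRight (4 * (m : ℝ))).measurableEmbedding
        (fun v => P (v + 4 * m)) B
      simp only [sub_add_cancel] at htr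
      rw [htr]
      refine setLIntegral_congr_fun hB (fun v hv => ?_)
      have hflip : flipEquiv k = -k := if_pos ⟨m, hm⟩
      rw [hflip]
      congr 1
      push_cast [hm]
      ring
    · obtain ⟨m, hm⟩ := hk
      have hkr : (k : ℝ) = 2 * m + 1 := by rw [hm]; push_cast; ring
      have hseteq : (fun u => g (f u)) ⁻¹' B ∩ S k
          = ((fun u => 4 * (m : ℝ) + 2 - u) ⁻¹' B) \ {4 * (m : ℝ) + 3} := by
        ext u
        simp only [Set.mem_inter_iff, Set.mem_preimage, S, Set.mem_Ico, Set.mem_diff,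
          Set.mem_singleton_iff]
        constructor
        · rintro ⟨huB, hu1, hu2⟩
          rw [hkr] at hu1 hu2
          rw [gf_odd m (by linarith) (by linarith)] at huB
          exact ⟨huB, by intro hc; rw [hc] at hu2; linarith⟩
        · rintro ⟨huB, hne⟩
          obtain ⟨hl, hr⟩ := hBsub huB
          have hu2 : u < 4 * m + 3 := lt_of_le_of_ne (by linarith) hne
          rw [hkr]
          exact ⟨by rw [gf_odd m (by linarith) hu2]; exact huB, by linarith, by linarith⟩
      have hae : ((fun u => 4 * (m : ℝ) + 2 - u) ⁻¹' B) \ ({4 * (m : ℝ) + 3} : Set ℝ)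
          =ᵐ[volume] ((fun u => 4 * (m : ℝ) + 2 - u) ⁻¹' B) :=
        diff_ae_eq_self.mpr (measure_mono_null Set.inter_subset_right (measure_singleton _))
      rw [hseteq]; refine (setLIntegral_congr hae).trans ?_
      have hmp : MeasurePreserving (fun u : ℝ => 4 * (m : ℝ) + 2 - u) volume volume := by
        have := (measurePreserving_add_left volume
          (4 * (m : ℝ) + 2)).comp (Measure.measurePreserving_neg volume)
        simpa [Function.comp_def, sub_eq_add_neg] using this
      have htr := hmp.setLIntegral_comp_preimage_emb
        (MeasurableEquiv.subLeft (4 * (m : ℝ) + 2)).measurableEmbedding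
        (fun v => P (4 * (m : ℝ) + 2 - v)) B
      simp only [sub_sub_cancel] at htr
      rw [htr]
      refine setLIntegral_congr_fun hB (fun v hv => ?_)
      have hflip : flipEquiv k = k := if_neg (by rw [hm]; simp [Int.even_add_one, parity_simps])
      rw [hflip]
      show ENNReal.ofReal (p (4 * (m : ℝ) + 2 - v)) = ENNReal.ofReal (p (v - 2 * (k : ℝ)))
      have harg : (4 * (m : ℝ) + 2 - v) = -(v - 2 * (k : ℝ)) := by rw [hkr]; ring
      rw [harg, heven]
  calc ∑' k : ℤ, ∫⁻ u in (fun u => g (f u)) ⁻¹' B ∩ S k, P u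
      = ∑' k : ℤ, ∫⁻ u in B, P (u - 2 * (flipEquiv k : ℤ)) := tsum_congr hterm
    _ = ∑' k : ℤ, ∫⁻ u in B, P (u - 2 * (k : ℤ)) :=
        flipEquiv.tsum_eq fun j : ℤ => ∫⁻ u in B, P (u - 2 * (j : ℤ))

lemma shift_Ico (k : ℤ) (P : ℝ → ℝ≥0∞) :
    ∫⁻ u in Set.Ico (-1 : ℝ) 1, P (u - 2 * k) = ∫⁻ u in S (-k), P u := by
  have hpre : (fun u : ℝ => u - 2 * (k : ℝ)) ⁻¹' (S (-k)) = Set.Ico (-1 : ℝ) 1 := by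
    ext u
    simp only [S, Set.mem_preimage, Set.mem_Ico]
    push_cast
    constructor <;> intro h <;> exact ⟨by linarith [h.1], by linarith [h.2]⟩
  rw [← hpre]
  exact (measurePreserving_sub_right volume (2 * (k : ℝ))).setLIntegral_comp_preimage_emb
    (MeasurableEquiv.subRight (2 * (k : ℝ))).measurableEmbedding P _

/-- If the random variable `Y` has an even density `p`, then for every Borel set
`A ⊆ [-1,1]` the probability that `g (f (Y)) ∈ A` equals `∫_A ∑ₖ p (u - 2k) du`; in
particular the law of the reflected variable `g (f (Y))` has density
`u ↦ ∑ₖ p (u - 2k)` on `[-1,1]` and density `0` outside `[-1,1]`. -/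
theorem reflected_density {Ω : Type*} [MeasureSpace Ω]
    [IsProbabilityMeasure (volume : Measure Ω)]
    (Y : Ω → ℝ) (hY : Measurable Y)
    (p : ℝ → ℝ) (hp : Measurable p) (hnn : ∀ u, 0 ≤ p u)
    (heven : ∀ u, p (-u) = p u)
    (hone : ∫ u, p u = 1)
    (hlaw : Measure.map Y (volume : Measure Ω) = volume.withDensity fun u => ENNReal.ofReal (p u)) :
    (∀ A : Set ℝ, MeasurableSet A → A ⊆ Set.Icc (-1 : ℝ) 1 →
      (volume : Measure Ω) {ω | g (f (Y ω)) ∈ A}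
        = ∫⁻ u in A, ENNReal.ofReal (∑' k : ℤ, p (u - 2 * k))) ∧
    Measure.map (fun ω => g (f (Y ω))) (volume : Measure Ω) =
      volume.withDensity
        (Set.indicator (Set.Icc (-1 : ℝ) 1)
          fun u => ENNReal.ofReal (∑' k : ℤ, p (u - 2 * k))) := by
  have hgfY : Measurable fun ω => g (f (Y ω)) := measurable_gf.comp hY
  have hInt : Integrable p := by
    by_contra hc
    rw [integral_undef hc] at hone
    norm_num at hone
  have hPint : ∫⁻ u, ENNReal.ofReal (p u) = 1 := by
    rw [← ofReal_integral_eq_lintegral_ofReal hInt (ae_of_all _ hnn), hone, ENNReal.ofReal_one]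
  set Q : ℝ → ℝ≥0∞ := fun u => ∑' k : ℤ, ENNReal.ofReal (p (u - 2 * k)) with hQdef
  have hPkm : ∀ k : ℤ, Measurable fun u : ℝ => ENNReal.ofReal (p (u - 2 * k)) :=
    fun k => (hp.comp (measurable_id.sub_const _)).ennreal_ofReal
  have hQm : Measurable Q := Measurable.ennreal_tsum hPkm
  have hQint : ∫⁻ u in Set.Icc (-1 : ℝ) 1, Q u = 1 := by
    have h0 : ∫⁻ u in Set.Icc (-1 : ℝ) 1, Q u = ∫⁻ u in Set.Ico (-1 : ℝ) 1, Q u :=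
      setLIntegral_congr Ico_ae_eq_Icc.symm
    rw [h0]
    calc ∫⁻ u in Set.Ico (-1 : ℝ) 1, Q u
        = ∑' k : ℤ, ∫⁻ u in Set.Ico (-1 : ℝ) 1, ENNReal.ofReal (p (u - 2 * k)) :=
          lintegral_tsum fun k => (hPkm k).aemeasurable
      _ = ∑' k : ℤ, ∫⁻ u in S (-k), ENNReal.ofReal (p u) :=
          tsum_congr fun k => shift_Ico k fun v => ENNReal.ofReal (p v)
      _ = ∑' k : ℤ, ∫⁻ u in S k, ENNReal.ofReal (p u) :=
          (Equiv.neg ℤ).tsum_eq fun j : ℤ => ∫⁻ u in S j, ENNReal.ofReal (p u)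
      _ = ∫⁻ u in ⋃ k : ℤ, S k, ENNReal.ofReal (p u) :=
          (lintegral_iUnion S_meas S_disj _).symm
      _ = 1 := by rw [S_cover, Measure.restrict_univ, hPint]
  have hfin : ∀ᵐ u : ℝ, u ∈ Set.Icc (-1 : ℝ) 1 → Q u ≠ ⊤ := by
    have h1 : ∀ᵐ u ∂(volume.restrict (Set.Icc (-1 : ℝ) 1)), Q u < ⊤ :=
      ae_lt_top hQm (by rw [hQint]; exact ENNReal.one_ne_top)
    rw [ae_restrict_iff' measurableSet_Icc] at h1
    filter_upwards [h1] with u hu hmem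
    exact (hu hmem).ne
  have hdens : (Set.indicator (Set.Icc (-1 : ℝ) 1)
        fun u => ENNReal.ofReal (∑' k : ℤ, p (u - 2 * k))) =ᵐ[volume]
      Set.indicator (Set.Icc (-1 : ℝ) 1) Q := by
    filter_upwards [hfin] with u hu
    by_cases hmem : u ∈ Set.Icc (-1 : ℝ) 1
    · rw [Set.indicator_of_mem hmem, Set.indicator_of_mem hmem]
      have hne := hu hmem
      have hsumm : Summable fun k : ℤ => p (u - 2 * k) := by
        have hs := ENNReal.summable_toReal hne
        simpa [ENNReal.toReal_ofReal (hnn _)] using hs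
      exact ENNReal.ofReal_tsum_of_nonneg (fun k => hnn _) hsumm
    · rw [Set.indicator_of_notMem hmem, Set.indicator_of_notMem hmem]
  have hmapQ : Measure.map (fun ω => g (f (Y ω))) volume
      = volume.withDensity (Set.indicator (Set.Icc (-1 : ℝ) 1) Q) := by
    have hcomp : (fun ω => g (f (Y ω))) = (fun u => g (f u)) ∘ Y := rfl
    rw [hcomp, ← Measure.map_map measurable_gf hY, hlaw]
    ext B hB
    rw [Measure.map_apply measurable_gf hB,
      withDensity_apply _ (measurable_gf hB),
      withDensity_apply _ hB, setLIntegral_indicator measurableSet_Icc]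
    have hpre : (fun u => g (f u)) ⁻¹' B
        = (fun u => g (f u)) ⁻¹' (B ∩ Set.Icc (-1 : ℝ) 1) := by
      ext u
      simp only [Set.mem_preimage, Set.mem_inter_iff]
      exact ⟨fun h => ⟨h, gf_mem u⟩, fun h => h.1⟩
    rw [hpre, key_lintegral p hp heven _ (hB.inter measurableSet_Icc)
      Set.inter_subset_right, Set.inter_comm]
    exact (lintegral_tsum fun k => (hPkm k).aemeasurable).symm
  have hmap' : Measure.map (fun ω => g (f (Y ω))) volume
      = volume.withDensity (Set.indicator (Set.Icc (-1 : ℝ) 1)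
          fun u => ENNReal.ofReal (∑' k : ℤ, p (u - 2 * k))) :=
    hmapQ.trans (withDensity_congr_ae hdens.symm)
  refine ⟨?_, hmap'⟩
  intro A hA hAsub
  have hsetA : {ω | g (f (Y ω)) ∈ A} = (fun ω => g (f (Y ω))) ⁻¹' A := rfl
  rw [hsetA, ← Measure.map_apply hgfY hA, hmap', withDensity_apply _ hA,
    setLIntegral_indicator measurableSet_Icc, Set.inter_eq_self_of_subset_right hAsub]
end

section
/- Let Q₀ : ℝ → ℝ be nonnegative, even, 4-periodic, bounded, with ∫_{−2}^{2} Q₀(u) du = 1, and let c = inf_{u∈[−2,2)} Q₀(u). Then for every bounded measurable probability density μ on [−2,2) (μ ≥ 0, ∫_{−2}^{2} μ = 1), the function (μq)(u) = ∫_{−2}^{2} μ(v) Q₀(u − v) dv satisfies sup_{u∈[−2,2)} |(μq)(u) − 1/4| ≤ (1 − 4c) · sup_{v∈[−2,2)} |μ(v) − 1/4|. -/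
open MeasureTheory

/-- One step of the Markov kernel with symmetric transition density
`q (v, u) = Q₀ (u - v)` contracts the sup-distance to the uniform density `1/4`
on `[-2,2)` by the factor `1 - 4c`, where `c = inf_{[-2,2)} Q₀`. -/
theorem one_step_contraction (Q₀ : ℝ → ℝ)
    (hnn : ∀ u, 0 ≤ Q₀ u)
    (heven : ∀ u, Q₀ (-u) = Q₀ u)
    (hper : ∀ u, Q₀ (u + 4) = Q₀ u)
    (hbdd : ∃ C : ℝ, ∀ u, Q₀ u ≤ C)
    (hint : ∫ u in (-2 : ℝ)..2, Q₀ u = 1) :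
    ∀ μ : ℝ → ℝ, Measurable μ → (∀ v, 0 ≤ μ v) → (∃ C : ℝ, ∀ v, μ v ≤ C) →
      (∫ v in (-2 : ℝ)..2, μ v = 1) →
      sSup ((fun u => |(∫ v in (-2 : ℝ)..2, μ v * Q₀ (u - v)) - 1 / 4|) ''
          Set.Ico (-2 : ℝ) 2)
        ≤ (1 - 4 * sInf (Q₀ '' Set.Ico (-2 : ℝ) 2)) *
            sSup ((fun v => |μ v - 1 / 4|) '' Set.Ico (-2 : ℝ) 2) := by
  intro μ hmeas hpos hbμ hμ1
  obtain ⟨C, hC⟩ := hbμ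
  have hper4 : Function.Periodic Q₀ 4 := hper
  set c := sInf (Q₀ '' Set.Ico (-2 : ℝ) 2) with hcdef
  set M := sSup ((fun v => |μ v - 1 / 4|) '' Set.Ico (-2 : ℝ) 2) with hMdef
  -- basic facts about c
  have hQbdb : BddBelow (Q₀ '' Set.Ico (-2 : ℝ) 2) := by
    refine ⟨0, ?_⟩; rintro x ⟨y, _, rfl⟩; exact hnn y
  have hcQ : ∀ x, c ≤ Q₀ x := by
    intro x
    obtain ⟨y, hy, hxy⟩ := hper4.exists_mem_Ico (by norm_num) x (-2)
    have hy' : y ∈ Set.Ico (-2 : ℝ) 2 := by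
      rw [show (-2 : ℝ) + 4 = 2 by norm_num] at hy; exact hy
    rw [hxy]
    exact csInf_le hQbdb ⟨y, hy', rfl⟩
  -- Q₀ is interval integrable
  have hQint : IntervalIntegrable Q₀ volume (-2) 2 := by
    by_contra h
    rw [intervalIntegral.integral_undef h] at hint; norm_num at hint
  have h4c : 4 * c ≤ 1 := by
    have hmono := intervalIntegral.integral_mono_on (by norm_num : (-2 : ℝ) ≤ 2)
      (intervalIntegrable_const (c := c)) hQint (fun x _ => hcQ x)
    rw [hint, intervalIntegral.integral_const, smul_eq_mul] at hmono
    linarith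
  -- basic facts about M
  have hMbd : BddAbove ((fun v => |μ v - 1 / 4|) '' Set.Ico (-2 : ℝ) 2) := by
    refine ⟨C + 1 / 4, ?_⟩
    rintro x ⟨v, _, rfl⟩
    have h1 : |μ v - 1 / 4| ≤ |μ v| + |(1 : ℝ) / 4| := abs_sub (μ v) (1 / 4)
    rw [abs_of_nonneg (hpos v), show |(1 : ℝ) / 4| = 1 / 4 by norm_num] at h1
    linarith [hC v]
  have hvM : ∀ v ∈ Set.Ico (-2 : ℝ) 2, |μ v - 1 / 4| ≤ M := fun v hv =>
    le_csSup hMbd ⟨v, hv, rfl⟩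
  have hM0 : 0 ≤ M := le_trans (abs_nonneg _) (hvM 0 (by norm_num))
  have hRHS0 : 0 ≤ (1 - 4 * c) * M := mul_nonneg (by linarith) hM0
  -- key fact: translate integral of Q₀ is 1
  have hA : ∀ u : ℝ, ∫ v in (-2 : ℝ)..2, Q₀ (u - v) = 1 := by
    intro u
    rw [intervalIntegral.integral_comp_sub_left]
    have h := hper4.intervalIntegral_add_eq (u - 2) (-2)
    have e1 : u - 2 + 4 = u + 2 := by ring
    have e2 : (-2 : ℝ) + 4 = 2 := by norm_num
    rw [e1, e2] at h
    rw [show u - (-2 : ℝ) = u + 2 by ring, h, hint]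
  have hQuint : ∀ u : ℝ, IntervalIntegrable (fun v => Q₀ (u - v)) volume (-2) 2 := by
    intro u
    by_contra h
    have := hA u
    rw [intervalIntegral.integral_undef h] at this; norm_num at this
  -- μ is interval integrable
  have hμnorm : ∀ v, ‖μ v‖ ≤ C := fun v => by
    rw [Real.norm_eq_abs, abs_of_nonneg (hpos v)]; exact hC v
  have hμint : IntervalIntegrable μ volume (-2) 2 := by
    apply IntervalIntegrable.mono_fun' (g := fun _ => C) intervalIntegrable_const
      hmeas.aestronglyMeasurable
    exact Filter.Eventually.of_forall hμnorm
  apply Real.sSup_le _ hRHS0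
  rintro x ⟨u, hu, rfl⟩
  -- integrability of the product
  have hprod : IntervalIntegrable (fun v => μ v * Q₀ (u - v)) volume (-2) 2 := by
    have h1 := (intervalIntegrable_iff_integrableOn_Ioc_of_le
      (by norm_num : (-2 : ℝ) ≤ 2)).mp (hQuint u)
    rw [intervalIntegrable_iff_integrableOn_Ioc_of_le (by norm_num)]
    exact h1.bdd_mul hmeas.aestronglyMeasurable.restrict (c := C) (Filter.Eventually.of_forall hμnorm)
  have hgint : IntervalIntegrable (fun v => (μ v - 1 / 4) * (Q₀ (u - v) - c))
      volume (-2) 2 := by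
    have h1 : ∀ v, (μ v - 1 / 4) * (Q₀ (u - v) - c)
        = μ v * Q₀ (u - v) - (1 / 4) * Q₀ (u - v) - c * μ v + c * (1 / 4) := by
      intro v; ring
    simp_rw [h1]
    exact (((hprod.sub ((hQuint u).const_mul (1 / 4))).sub
      (hμint.const_mul c)).add intervalIntegrable_const)
  -- the key identity
  have key : ∫ v in (-2 : ℝ)..2, (μ v - 1 / 4) * (Q₀ (u - v) - c)
      = (∫ v in (-2 : ℝ)..2, μ v * Q₀ (u - v)) - 1 / 4 := by
    have h1 : ∀ v, (μ v - 1 / 4) * (Q₀ (u - v) - c)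
        = μ v * Q₀ (u - v) - (1 / 4) * Q₀ (u - v) - c * μ v + c * (1 / 4) := by
      intro v; ring
    simp_rw [h1]
    rw [intervalIntegral.integral_add ((hprod.sub ((hQuint u).const_mul (1 / 4))).sub
        (hμint.const_mul c)) intervalIntegrable_const,
      intervalIntegral.integral_sub (hprod.sub ((hQuint u).const_mul (1 / 4)))
        (hμint.const_mul c),
      intervalIntegral.integral_sub hprod ((hQuint u).const_mul (1 / 4)),
      intervalIntegral.integral_const_mul, intervalIntegral.integral_const_mul,
      intervalIntegral.integral_const, hA u, hμ1]
    simp [smul_eq_mul]; ring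
  show |(∫ v in (-2 : ℝ)..2, μ v * Q₀ (u - v)) - 1 / 4| ≤ (1 - 4 * c) * M
  rw [← key]
  -- pointwise ae bound
  have hne2 : ∀ᵐ v ∂(volume.restrict (Set.Icc (-2 : ℝ) 2)), v ≠ (2 : ℝ) := by
    rw [ae_iff]
    have hs : {v : ℝ | ¬ v ≠ 2} = {(2 : ℝ)} := by ext v; simp
    rw [hs, Measure.restrict_apply (measurableSet_singleton 2)]
    exact measure_mono_null Set.inter_subset_left Real.volume_singleton
  have hae : (fun v => |(μ v - 1 / 4) * (Q₀ (u - v) - c)|)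
      ≤ᵐ[volume.restrict (Set.Icc (-2 : ℝ) 2)] fun v => M * (Q₀ (u - v) - c) := by
    filter_upwards [hne2, ae_restrict_mem measurableSet_Icc] with v hv2 hvIcc
    have hvIco : v ∈ Set.Ico (-2 : ℝ) 2 := ⟨hvIcc.1, lt_of_le_of_ne hvIcc.2 hv2⟩
    have hQc : (0 : ℝ) ≤ Q₀ (u - v) - c := sub_nonneg.2 (hcQ _)
    calc |(μ v - 1 / 4) * (Q₀ (u - v) - c)|
        = |μ v - 1 / 4| * (Q₀ (u - v) - c) := by
          rw [abs_mul, abs_of_nonneg hQc]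
      _ ≤ M * (Q₀ (u - v) - c) :=
          mul_le_mul_of_nonneg_right (hvM v hvIco) hQc
  have habs : |∫ v in (-2 : ℝ)..2, (μ v - 1 / 4) * (Q₀ (u - v) - c)|
      ≤ ∫ v in (-2 : ℝ)..2, |(μ v - 1 / 4) * (Q₀ (u - v) - c)| :=
    intervalIntegral.abs_integral_le_integral_abs (by norm_num)
  have hmono2 : (∫ v in (-2 : ℝ)..2, |(μ v - 1 / 4) * (Q₀ (u - v) - c)|)
      ≤ ∫ v in (-2 : ℝ)..2, M * (Q₀ (u - v) - c) :=
    intervalIntegral.integral_mono_ae_restrict (by norm_num) hgint.abs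
      (((hQuint u).sub intervalIntegrable_const).const_mul M) hae
  have hval : (∫ v in (-2 : ℝ)..2, M * (Q₀ (u - v) - c)) = (1 - 4 * c) * M := by
    rw [intervalIntegral.integral_const_mul,
      intervalIntegral.integral_sub (hQuint u) intervalIntegrable_const,
      hA u, intervalIntegral.integral_const]
    simp [smul_eq_mul]; ring
  calc |∫ v in (-2 : ℝ)..2, (μ v - 1 / 4) * (Q₀ (u - v) - c)|
      ≤ ∫ v in (-2 : ℝ)..2, M * (Q₀ (u - v) - c) := habs.trans hmono2
    _ = (1 - 4 * c) * M := hval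
end
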